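/- arXiv:1810.03483 — 2 statements merged into one kernel-verified Lean document; each statement's English description precedes it below -/
import Mathlib

section
/- Fix N ≥ 1 and k > 0, and let G : ℝ^N → ℝ^N be differentiable with each component G_i convex and each partial derivative ∂G_i/∂u_j locally Lipschitz. Let 0 < T < +∞ and let (M, U) : [0, T) → ℝ^N × ℝ^N be a differentiable solution of the discrete Hessian Riemannian flow with all components m_i(t) > 0 on [0, T), and suppose (M(t), U(t)) is bounded on [0, T). Then for every sequence t_i → T with (M(t_i), U(t_i)) → (M*, U*) ∈ ℝ^N × ℝ^N, every component of M* is strictly positive; that is, every limit point of the trajectory as t → T lies in (0,∞)^N × ℝ^N. -/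
open Filter

/-- The discrete entropy-penalized effective Hamiltonian
`H̃(M,U) = (∑ᵢ (mᵢ Gᵢ(U) − (1/k) mᵢ ln mᵢ)) / (∑ᵢ mᵢ)`. -/
noncomputable def Htilde {N : ℕ} (k : ℝ) (G : (Fin N → ℝ) → (Fin N → ℝ))
    (M U : Fin N → ℝ) : ℝ :=
  (∑ i, (M i * G U i - (1 / k) * (M i * Real.log (M i)))) / ∑ i, M i

/-- First block of `F̄(M,U)`: `(mᵢ(−Gᵢ(U) + H̃(M,U) + (1/k) ln mᵢ))ᵢ`. -/
noncomputable def Fbar1 {N : ℕ} (k : ℝ) (G : (Fin N → ℝ) → (Fin N → ℝ))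
    (M U : Fin N → ℝ) (i : Fin N) : ℝ :=
  M i * (-(G U i) + Htilde k G M U + (1 / k) * Real.log (M i))

/-- Second block of `F̄(M,U)`: the vector `DG(U)ᵀ M`. -/
noncomputable def Fbar2 {N : ℕ} (G : (Fin N → ℝ) → (Fin N → ℝ))
    (M U : Fin N → ℝ) (j : Fin N) : ℝ :=
  ∑ i, M i * (fderiv ℝ G U) (Pi.single j 1) i

/-- `|x log x| ≤ 1 + C^2` for `0 < x ≤ C`. -/
lemma abs_mul_log_le (C x : ℝ) (hx : 0 < x) (hxC : x ≤ C) :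
    |x * Real.log x| ≤ 1 + C ^ 2 := by
  have hC : 0 < C := hx.trans_le hxC
  rw [abs_le]
  constructor
  · -- -(1+C^2) ≤ x log x, since -x log x = x log (1/x) ≤ x (1/x - 1) = 1 - x ≤ 1
    have h1 : Real.log x⁻¹ ≤ x⁻¹ - 1 := Real.log_le_sub_one_of_pos (inv_pos.mpr hx)
    have h2 : -(x * Real.log x) = x * Real.log x⁻¹ := by rw [Real.log_inv]; ring
    nlinarith [mul_le_mul_of_nonneg_left h1 hx.le, mul_inv_cancel₀ hx.ne', sq_nonneg C]
  · -- x log x ≤ x (x-1) ≤ C^2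
    have h1 : Real.log x ≤ x - 1 := Real.log_le_sub_one_of_pos hx
    nlinarith [mul_le_mul_of_nonneg_left h1 hx.le]

/-- The sum of `-(Fbar1)` over all indices vanishes: total mass is conserved. -/
lemma sum_neg_Fbar1 {N : ℕ} (k : ℝ) (G : (Fin N → ℝ) → (Fin N → ℝ))
    (m u : Fin N → ℝ) (hpos : (∑ i, m i) ≠ 0) :
    ∑ i, -(Fbar1 k G m u i) = 0 := by
  have hHsum : Htilde k G m u * ∑ i, m i
      = ∑ i, (m i * G u i - (1 / k) * (m i * Real.log (m i))) := by
    rw [Htilde, div_mul_cancel₀ _ hpos]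
  calc ∑ i, -(Fbar1 k G m u i)
      = ∑ i, ((m i * G u i - (1 / k) * (m i * Real.log (m i))) - Htilde k G m u * m i) := by
        refine Finset.sum_congr rfl fun i _ => ?_
        rw [Fbar1]; ring
    _ = (∑ i, (m i * G u i - (1 / k) * (m i * Real.log (m i)))) - Htilde k G m u * ∑ i, m i := by
        rw [Finset.sum_sub_distrib, Finset.mul_sum]
    _ = 0 := by rw [hHsum, sub_self]

/-- for a bounded positive solution of the discrete Hessian Riemannian flow on
`[0,T)`, `T < ∞`, every limit point of the trajectory as `t → T` lies in `(0,∞)^N × ℝ^N`: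
all components of the `M`-part of any limit point are strictly positive. -/
theorem discrete_HRF_limit_points_positive
    (N : ℕ) (hN : 1 ≤ N) (k : ℝ) (hk : 0 < k)
    (G : (Fin N → ℝ) → (Fin N → ℝ))
    (hGdiff : Differentiable ℝ G)
    (hGconv : ∀ i : Fin N, ConvexOn ℝ Set.univ (fun U => G U i))
    (hGlip : ∀ i j : Fin N, LocallyLipschitz (fun U => (fderiv ℝ G U) (Pi.single j 1) i))
    (T : ℝ) (hT0 : 0 < T)
    (M U : ℝ → Fin N → ℝ)
    (hflowM : ∀ t ∈ Set.Ico (0 : ℝ) T, ∀ i,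
      HasDerivAt (fun s => M s i) (-(Fbar1 k G (M t) (U t) i)) t)
    (hflowU : ∀ t ∈ Set.Ico (0 : ℝ) T, ∀ i,
      HasDerivAt (fun s => U s i) (-(Fbar2 G (M t) (U t) i)) t)
    (hMpos : ∀ t ∈ Set.Ico (0 : ℝ) T, ∀ i, 0 < M t i)
    (hbdd : ∃ C : ℝ, ∀ t ∈ Set.Ico (0 : ℝ) T, ∀ i, |M t i| + |U t i| ≤ C) :
    ∀ (tseq : ℕ → ℝ) (Mlim Ulim : Fin N → ℝ),
      (∀ n, tseq n ∈ Set.Ico (0 : ℝ) T) →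
      Tendsto tseq atTop (nhds T) →
      Tendsto (fun n => M (tseq n)) atTop (nhds Mlim) →
      Tendsto (fun n => U (tseq n)) atTop (nhds Ulim) →
      ∀ i, 0 < Mlim i := by
  haveI : NeZero N := ⟨Nat.one_le_iff_ne_zero.mp hN⟩
  obtain ⟨C, hC⟩ := hbdd
  set D := Set.Ico (0 : ℝ) T with hD
  have h0D : (0 : ℝ) ∈ D := ⟨le_refl 0, hT0⟩
  -- componentwise bounds
  have hMle : ∀ t ∈ D, ∀ i, M t i ≤ C := fun t ht i =>
    (le_abs_self _).trans ((le_add_of_nonneg_right (abs_nonneg _)).trans (hC t ht i))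
  have hUle : ∀ t ∈ D, ∀ i, |U t i| ≤ C := fun t ht i =>
    (le_add_of_nonneg_left (abs_nonneg _)).trans (hC t ht i)
  have hC0 : (0 : ℝ) < C := lt_of_lt_of_le (hMpos 0 h0D ⟨0, hN⟩) (hMle 0 h0D ⟨0, hN⟩)
  -- bound on G on the trajectory
  obtain ⟨CG, hCG⟩ := (isCompact_closedBall (0 : Fin N → ℝ) C).exists_bound_of_continuousOn
    hGdiff.continuous.continuousOn
  have hCG0 : 0 ≤ CG := (norm_nonneg _).trans (hCG (U 0) (by
    rw [Metric.mem_closedBall, dist_zero_right]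
    exact (pi_norm_le_iff_of_nonneg hC0.le).mpr fun i => by
      simpa using hUle 0 h0D i))
  have hGb : ∀ t ∈ D, ∀ i, |G (U t) i| ≤ CG := by
    intro t ht i
    have hball : U t ∈ Metric.closedBall (0 : Fin N → ℝ) C := by
      rw [Metric.mem_closedBall, dist_zero_right]
      exact (pi_norm_le_iff_of_nonneg hC0.le).mpr fun j => by simpa using hUle t ht j
    calc |G (U t) i| = ‖G (U t) i‖ := rfl
      _ ≤ ‖G (U t)‖ := norm_le_pi_norm _ i
      _ ≤ CG := hCG _ hball
  -- total mass conservation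
  set S := ∑ i, M 0 i with hSdef
  have hS0 : 0 < S := Finset.sum_pos (fun i _ => hMpos 0 h0D i) Finset.univ_nonempty
  have hsumpos : ∀ t ∈ D, 0 < ∑ i, M t i := fun t ht =>
    Finset.sum_pos (fun i _ => hMpos t ht i) Finset.univ_nonempty
  have hsum_deriv : ∀ t ∈ D, HasDerivAt (fun s => ∑ i, M s i) 0 t := by
    intro t ht
    have h := HasDerivAt.fun_sum (fun i (_ : i ∈ Finset.univ) => hflowM t ht i)
    rwa [sum_neg_Fbar1 k G (M t) (U t) (hsumpos t ht).ne'] at h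
  have hintD : interior D = Set.Ioo (0 : ℝ) T := by rw [hD, interior_Ico]
  have hconst : ∀ t ∈ D, (∑ i, M t i) = S := by
    have hcont : ContinuousOn (fun s => ∑ i, M s i) D := fun t ht =>
      ((hsum_deriv t ht).continuousAt).continuousWithinAt
    have hdiff : DifferentiableOn ℝ (fun s => ∑ i, M s i) (interior D) := by
      intro t ht
      rw [hintD] at ht
      exact ((hsum_deriv t (Set.Ioo_subset_Ico_self ht)).differentiableAt).differentiableWithinAt
    have hder0 : ∀ x ∈ interior D, deriv (fun s => ∑ i, M s i) x = 0 := by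
      intro x hx
      rw [hintD] at hx
      exact (hsum_deriv x (Set.Ioo_subset_Ico_self hx)).deriv
    have hmono := monotoneOn_of_deriv_nonneg (convex_Ico 0 T) hcont hdiff
      (fun x hx => le_of_eq (hder0 x hx).symm)
    have hanti := antitoneOn_of_deriv_nonpos (convex_Ico 0 T) hcont hdiff
      (fun x hx => le_of_eq (hder0 x hx))
    exact fun t ht => le_antisymm (hanti h0D ht ht.1) (hmono h0D ht ht.1)
  -- bound on Htilde along the trajectory
  set B : ℝ := CG + (N * (C * CG + (1 / k) * (1 + C ^ 2))) / S with hBdef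
  have hHb : ∀ t ∈ D, |Htilde k G (M t) (U t)| ≤ (N * (C * CG + (1 / k) * (1 + C ^ 2))) / S := by
    intro t ht
    rw [Htilde, hconst t ht, abs_div, abs_of_pos hS0]
    gcongr
    calc |∑ i, (M t i * G (U t) i - 1 / k * (M t i * Real.log (M t i)))|
        ≤ ∑ i, |M t i * G (U t) i - 1 / k * (M t i * Real.log (M t i))| :=
          Finset.abs_sum_le_sum_abs _ _
      _ ≤ ∑ _i : Fin N, (C * CG + (1 / k) * (1 + C ^ 2)) := by
          refine Finset.sum_le_sum fun i _ => ?_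
          have h1 : |M t i * G (U t) i| ≤ C * CG := by
            rw [abs_mul]
            exact mul_le_mul (by rw [abs_of_pos (hMpos t ht i)]; exact hMle t ht i)
              (hGb t ht i) (abs_nonneg _) hC0.le
          have h2 : |1 / k * (M t i * Real.log (M t i))| ≤ (1 / k) * (1 + C ^ 2) := by
            rw [abs_mul, abs_of_pos (by positivity : (0:ℝ) < 1 / k)]
            exact mul_le_mul_of_nonneg_left
              (abs_mul_log_le C (M t i) (hMpos t ht i) (hMle t ht i)) (by positivity)
          calc |M t i * G (U t) i - 1 / k * (M t i * Real.log (M t i))|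
              ≤ |M t i * G (U t) i| + |1 / k * (M t i * Real.log (M t i))| := abs_sub _ _
            _ ≤ C * CG + (1 / k) * (1 + C ^ 2) := add_le_add h1 h2
      _ = N * (C * CG + (1 / k) * (1 + C ^ 2)) := by
          rw [Finset.sum_const, Finset.card_univ, Fintype.card_fin, nsmul_eq_mul]
  -- the key pointwise inequality
  have hKey : ∀ t ∈ D, ∀ i, 0 ≤ B + (G (U t) i - Htilde k G (M t) (U t)) := by
    intro t ht i
    have h1 : -CG ≤ G (U t) i := neg_le_of_abs_le (hGb t ht i)
    have h2 : Htilde k G (M t) (U t) ≤ (N * (C * CG + (1 / k) * (1 + C ^ 2))) / S :=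
      le_of_abs_le (hHb t ht)
    rw [hBdef]; linarith
  -- the barrier function h_i(t) = exp(t/k) (log m_i(t) + k B) is nondecreasing
  intro tseq Mlim Ulim htseq htT hMlim hUlim i
  set g : ℝ → ℝ := fun s => Real.log (M s i) with hgdef
  set h : ℝ → ℝ := fun s => Real.exp (s / k) * (g s + k * B) with hhdef
  have hhderiv : ∀ t ∈ D, HasDerivAt h
      (Real.exp (t / k) * (1 / k) * (g t + k * B)
        + Real.exp (t / k) * (-(Fbar1 k G (M t) (U t) i) / M t i)) t := by
    intro t ht
    have hA : HasDerivAt (fun s : ℝ => Real.exp (s / k)) (Real.exp (t / k) * (1 / k)) t :=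
      ((hasDerivAt_id t).div_const k).exp
    have hg : HasDerivAt (fun s => g s + k * B)
        (-(Fbar1 k G (M t) (U t) i) / M t i) t :=
      (((hflowM t ht i).log (hMpos t ht i).ne')).add_const _
    exact hA.mul hg
  have hhderiv_eq : ∀ t ∈ D,
      Real.exp (t / k) * (1 / k) * (g t + k * B)
        + Real.exp (t / k) * (-(Fbar1 k G (M t) (U t) i) / M t i)
      = Real.exp (t / k) * (1 / k) * (k * (B + (G (U t) i - Htilde k G (M t) (U t)))) := by
    intro t ht
    have hm : M t i ≠ 0 := (hMpos t ht i).ne'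
    rw [Fbar1, hgdef]
    field_simp
    ring
  have hhnonneg : ∀ t ∈ interior D, 0 ≤ deriv h t := by
    intro t ht
    rw [hintD] at ht
    have ht' : t ∈ D := Set.Ioo_subset_Ico_self ht
    rw [(hhderiv t ht').deriv, hhderiv_eq t ht']
    have := hKey t ht' i
    positivity
  have hhmono : MonotoneOn h D := by
    refine monotoneOn_of_deriv_nonneg (convex_Ico 0 T) ?_ ?_ hhnonneg
    · exact fun t ht => ((hhderiv t ht).continuousAt).continuousWithinAt
    · intro t ht
      rw [hintD] at ht
      exact ((hhderiv t (Set.Ioo_subset_Ico_self ht)).differentiableAt).differentiableWithinAt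
  -- uniform lower bound on log m_i
  set L : ℝ := -|g 0 + k * B| - k * B with hLdef
  have hlb : ∀ t ∈ D, Real.exp L ≤ M t i := by
    intro t ht
    have h0t : h 0 ≤ h t := hhmono h0D ht ht.1
    have he1 : h 0 = g 0 + k * B := by
      rw [hhdef]; simp
    have hexp_pos : (0:ℝ) < Real.exp (t / k) := Real.exp_pos _
    have hexp_le1 : Real.exp (-(t / k)) ≤ 1 := by
      rw [Real.exp_le_one_iff]
      have : 0 ≤ t / k := div_nonneg ht.1 hk.le
      linarith
    have h2 : (g 0 + k * B) * Real.exp (-(t / k)) ≤ g t + k * B := by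
      have hht : h t = Real.exp (t / k) * (g t + k * B) := rfl
      have h0t' : g 0 + k * B ≤ Real.exp (t / k) * (g t + k * B) := by
        rw [← hht, ← he1]; exact h0t
      have h3 : (g 0 + k * B) * Real.exp (-(t / k))
          ≤ (Real.exp (t / k) * (g t + k * B)) * Real.exp (-(t / k)) :=
        mul_le_mul_of_nonneg_right h0t' (Real.exp_pos _).le
      calc (g 0 + k * B) * Real.exp (-(t / k)) ≤ _ := h3
        _ = g t + k * B := by
            rw [mul_comm (Real.exp (t / k)), mul_assoc, ← Real.exp_add]; simp
    have h4 : -|g 0 + k * B| ≤ (g 0 + k * B) * Real.exp (-(t / k)) := by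
      rcases le_or_gt 0 (g 0 + k * B) with hc | hc
      · have : 0 ≤ (g 0 + k * B) * Real.exp (-(t / k)) := by positivity
        linarith [abs_nonneg (g 0 + k * B)]
      · rw [abs_of_neg hc]
        have := mul_le_mul_of_nonpos_left hexp_le1 hc.le
        nlinarith
    have hgL : L ≤ g t := by
      have : -|g 0 + k * B| ≤ g t + k * B := le_trans h4 h2
      rw [hLdef]; linarith
    calc Real.exp L ≤ Real.exp (g t) := Real.exp_le_exp.mpr hgL
      _ = M t i := Real.exp_log (hMpos t ht i)
  -- pass to the limit
  have htend : Tendsto (fun n => M (tseq n) i) atTop (nhds (Mlim i)) :=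
    ((continuous_apply i).tendsto Mlim).comp hMlim
  have hMlimge : Real.exp L ≤ Mlim i :=
    ge_of_tendsto' htend fun n => hlb (tseq n) (htseq n)
  exact lt_of_lt_of_le (Real.exp_pos L) hMlimge
end

section
/- Fix N ≥ 1 and k > 0, and let G : ℝ^N → ℝ^N be differentiable and translation invariant: G_i(U + s·𝟙) = G_i(U) for all U ∈ ℝ^N, s ∈ ℝ and 1 ≤ i ≤ N, where 𝟙 = (1,…,1) ∈ ℝ^N. Then DG(U)·𝟙 = 0 for every U, and hence for every M ∈ ℝ^N, Σ_{j=1}^N (DG(U)ᵀ M)_j = 0. Consequently, along any differentiable solution (M(t), U(t)) of the discrete Hessian Riemannian flow with all m_j(t) > 0, the sum Σ_{j=1}^N u_j(t) is constant in t. -/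
/-- if `G` is translation invariant, `G(U + s𝟙) = G(U)`, then `DG(U)𝟙 = 0`,
hence `∑ⱼ (DG(U)ᵀ M)ⱼ = 0` for all `M`; consequently `∑ⱼ uⱼ(t)` is constant along any
positive solution of the discrete Hessian Riemannian flow on `[0,∞)`. -/
theorem discrete_HRF_u_sum_conservation
    (N : ℕ) (hN : 1 ≤ N) (k : ℝ) (hk : 0 < k)
    (G : (Fin N → ℝ) → (Fin N → ℝ))
    (hGdiff : Differentiable ℝ G)
    (hGtrans : ∀ (U : Fin N → ℝ) (s : ℝ) (i : Fin N), G (U + fun _ => s) i = G U i) :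
    (∀ U : Fin N → ℝ, (fderiv ℝ G U) (fun _ => 1) = 0) ∧
    (∀ (M U : Fin N → ℝ), ∑ j, Fbar2 G M U j = 0) ∧
    (∀ (M U : ℝ → Fin N → ℝ),
      (∀ t, 0 ≤ t → ∀ i, 0 < M t i) →
      (∀ t, 0 ≤ t → ∀ i,
        HasDerivAt (fun s => M s i) (-(Fbar1 k G (M t) (U t) i)) t ∧
        HasDerivAt (fun s => U s i) (-(Fbar2 G (M t) (U t) i)) t) →
      ∀ t, 0 ≤ t → ∑ j, U t j = ∑ j, U 0 j) := by
  have ones : (Fin N → ℝ) := fun _ => 1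
  have h1 : ∀ U : Fin N → ℝ, (fderiv ℝ G U) (fun _ => 1) = 0 := by
    intro U
    have hcurve : HasDerivAt (fun s : ℝ => U + s • (fun _ => (1:ℝ))) (fun _ => (1:ℝ)) 0 := by
      have := ((hasDerivAt_id (0:ℝ)).smul_const (fun _ => (1:ℝ))).const_add U
      simpa using this
    have hcomp : HasDerivAt (fun s : ℝ => G (U + s • (fun _ => (1:ℝ))))
        ((fderiv ℝ G U) (fun _ => 1)) 0 := by
      have := (hGdiff (U + (0:ℝ) • (fun _ => (1:ℝ)))).hasFDerivAt.comp_hasDerivAt 0 hcurve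
      simp at this
      exact this
    have hconst : (fun s : ℝ => G (U + s • (fun _ => (1:ℝ)))) = fun _ => G U := by
      funext s
      have : (s • (fun _ => (1:ℝ)) : Fin N → ℝ) = fun _ => s := by
        funext x; simp
      rw [this]
      funext i
      exact hGtrans U s i
    have h0 : HasDerivAt (fun s : ℝ => G (U + s • (fun _ => (1:ℝ)))) 0 0 := by
      rw [hconst]; exact hasDerivAt_const _ _
    exact hcomp.unique h0
  have h2 : ∀ (M U : Fin N → ℝ), ∑ j, Fbar2 G M U j = 0 := by
    intro M U
    unfold Fbar2
    rw [Finset.sum_comm]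
    apply Finset.sum_eq_zero
    intro i _
    rw [← Finset.mul_sum]
    have hs : ∑ j, (fderiv ℝ G U) (Pi.single j 1) i = 0 := by
      have hmap : ∑ j, (fderiv ℝ G U) (Pi.single j (1:ℝ)) i
          = (fderiv ℝ G U) (∑ j, Pi.single j (1:ℝ)) i := by
        rw [map_sum]; simp
      rw [hmap, Finset.univ_sum_single (fun _ => (1:ℝ)), h1 U]
      simp
    rw [hs, mul_zero]
  refine ⟨h1, h2, ?_⟩
  intro M U hpos hder t ht
  have hderF : ∀ x : ℝ, 0 ≤ x → HasDerivAt (fun s => ∑ j, U s j) 0 x := by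
    intro x hx
    have := HasDerivAt.sum (fun j (_ : j ∈ Finset.univ) => (hder x hx j).2)
    have hz : ∑ j ∈ Finset.univ, -(Fbar2 G (M x) (U x) j) = 0 := by
      rw [Finset.sum_neg_distrib, h2, neg_zero]
    rw [hz] at this
    have e : (∑ j, fun s => U s j) = fun s => ∑ j, U s j := by
      funext s
      rw [Finset.sum_apply]
    rw [e] at this
    exact this
  have key := constant_of_has_deriv_right_zero
    (f := fun s => ∑ j, U s j) (a := 0) (b := t)
    (fun x hx => ((hderF x hx.1).continuousAt).continuousWithinAt)
    (fun x hx => ((hderF x hx.1).hasDerivWithinAt))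
  exact key t ⟨ht, le_rfl⟩
end
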